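/- The distribution of the order statistics of k i.i.d. Uniform([0,1]) random variables is a stationary distribution for the k-point circular exclusion process: if X_(1) < X_(2) < ... < X_(k) are the order statistics of k i.i.d. uniforms on [0,1] and Y is an independent Uniform([0,1]) variable, then the configuration obtained by inserting Y and deleting X_(I), where I is the index with Y in the cyclic interval (X_(I-1), X_(I)) (with the convention that (X_(0), X_(1)) denotes (0,X_(1)) ∪ (X_(k),1) and in that case X_(1) is deleted), is again distributed as the order statistics of k i.i.d. uniforms on [0,1]. -/

import Mathlib

open MeasureTheory

/-- The uniform probability measure on `[0,1]`. -/
noncomputable def unifI : Measure ℝ := volume.restrict (Set.Icc (0:ℝ) 1)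

/-- Sorting a tuple into nondecreasing order (the order statistics of the tuple). -/
noncomputable def sortTuple {k : ℕ} (x : Fin k → ℝ) : Fin k → ℝ := x ∘ (Tuple.sort x)

/-- The index of the point deleted when `y` is inserted into the sorted configuration `x`:
the smallest point strictly above `y` is deleted; if there is none (cyclic convention),
the smallest point `x 0` is deleted. -/
noncomputable def delIdx {k : ℕ} (hk : 0 < k) (x : Fin k → ℝ) (y : ℝ) : Fin k := by
  classical
  exact if h : (Finset.univ.filter fun i => y < x i).Nonempty
    then (Finset.univ.filter fun i => y < x i).min' h
    else ⟨0, hk⟩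

/-- One step of the `k`-point circular exclusion process: insert `y`, delete the nearest
counterclockwise point, and record the configuration in sorted order. -/
noncomputable def exclStep {k : ℕ} (hk : 0 < k) (x : Fin k → ℝ) (y : ℝ) : Fin k → ℝ :=
  sortTuple (Function.update x (delIdx hk x y) y)

instance : IsProbabilityMeasure unifI := ⟨by simp [unifI]⟩

/-! ### sorting lemmas -/

lemma sortTuple_comp_perm {n : ℕ} (x : Fin n → ℝ) (σ : Equiv.Perm (Fin n)) :
    sortTuple (x ∘ σ) = sortTuple x := Tuple.comp_perm_comp_sort_eq_comp_sort

lemma sortTuple_of_monotone {n : ℕ} {x : Fin n → ℝ} (h : Monotone x) : sortTuple x = x := by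
  have := (Tuple.comp_sort_eq_comp_iff_monotone (f := x) (σ := Equiv.refl _)).mpr (by simpa using h)
  simpa [sortTuple] using this.symm

lemma exists_perm_comp {n m : ℕ} {f g : Fin n → Fin m} (hf : Function.Injective f)
    (hg : Function.Injective g) (h : Set.range f = Set.range g) :
    ∃ σ : Equiv.Perm (Fin n), f = g ∘ σ := by
  refine ⟨(Equiv.ofInjective f hf).trans ((Equiv.setCongr h).trans (Equiv.ofInjective g hg).symm), ?_⟩
  funext i
  simp only [Equiv.trans_apply, Equiv.apply_ofInjective_symm, Function.comp_apply]
  rfl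

lemma sortTuple_comp_eq {n m : ℕ} {s : Fin m → ℝ} {f g : Fin n → Fin m} (hf : Function.Injective f)
    (hg : Function.Injective g) (h : Set.range f = Set.range g) :
    sortTuple (s ∘ f) = sortTuple (s ∘ g) := by
  obtain ⟨σ, rfl⟩ := exists_perm_comp hf hg h
  rw [show s ∘ (g ∘ σ) = (s ∘ g) ∘ σ from rfl, sortTuple_comp_perm]

section key
variable {k : ℕ}

lemma upd_injective (r : Fin (k+1)) (i₀ : Fin k) :
    Function.Injective (fun j => if j = i₀ then r else Fin.succAbove r j) := by
  intro a b hab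
  by_cases ha : a = i₀ <;> by_cases hb : b = i₀
  · exact ha.trans hb.symm
  · beta_reduce at hab
    rw [if_pos ha, if_neg hb] at hab
    exact absurd hab.symm (Fin.succAbove_ne r b)
  · beta_reduce at hab
    rw [if_neg ha, if_pos hb] at hab
    exact absurd hab (Fin.succAbove_ne r a)
  · beta_reduce at hab
    rw [if_neg ha, if_neg hb] at hab
    exact Fin.succAbove_right_injective hab

lemma upd_range (r : Fin (k+1)) (i₀ : Fin k) :
    Set.range (fun j => if j = i₀ then r else Fin.succAbove r j) = {Fin.succAbove r i₀}ᶜ := by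
  ext x
  simp only [Set.mem_range, Set.mem_compl_iff, Set.mem_singleton_iff]
  constructor
  · rintro ⟨j, hj⟩
    by_cases hji : j = i₀
    · simp only [hji, if_pos rfl] at hj
      exact hj ▸ (Fin.ne_succAbove r i₀)
    · simp only [if_neg hji] at hj
      exact hj ▸ fun h => hji (Fin.succAbove_right_injective h)
  · intro hx
    by_cases hxr : x = r
    · exact ⟨i₀, by simp [hxr]⟩
    · obtain ⟨j, hj⟩ : x ∈ Set.range (Fin.succAbove r) := by
        rw [Fin.range_succAbove]; exact hxr
      refine ⟨j, ?_⟩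
      have hji : j ≠ i₀ := fun h => hx (h ▸ hj ▸ rfl)
      simp [if_neg hji, hj]

lemma range_comp_succAbove (τ : Equiv.Perm (Fin (k+1))) (r : Fin (k+1)) :
    Set.range (fun j : Fin k => τ (Fin.succAbove r j)) = {τ r}ᶜ := by
  ext x
  simp only [Set.mem_range, Set.mem_compl_iff, Set.mem_singleton_iff]
  constructor
  · rintro ⟨j, rfl⟩ h
    exact Fin.succAbove_ne r j (τ.injective h)
  · intro hx
    obtain ⟨j, hj⟩ : τ.symm x ∈ Set.range (Fin.succAbove r) := by
      rw [Fin.range_succAbove]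
      simp only [Set.mem_compl_iff, Set.mem_singleton_iff]
      intro h
      exact hx (by rw [← h]; simp)
    exact ⟨j, by rw [hj]; simp⟩

lemma key_identity (hk : 0 < k) (c : Fin (k+1) → ℝ) (τ : Equiv.Perm (Fin (k+1)))
    (hτ : StrictMono (c ∘ τ)) :
    sortTuple (c ∘ Fin.castSucc) = (c ∘ τ) ∘ Fin.succAbove (τ.symm (Fin.last k)) ∧
    exclStep hk (sortTuple (c ∘ Fin.castSucc)) (c (Fin.last k)) =
      (c ∘ τ) ∘ Fin.succAbove (τ.symm (Fin.last k) + 1) := by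
  classical
  set s : Fin (k+1) → ℝ := c ∘ τ with hs
  set r : Fin (k+1) := τ.symm (Fin.last k) with hr
  have hτr : τ r = Fin.last k := τ.apply_symm_apply _
  have hmono : Monotone (s ∘ Fin.succAbove r) :=
    hτ.monotone.comp (Fin.strictMono_succAbove r).monotone
  have hcomp : s ∘ Fin.succAbove r = c ∘ (fun j => τ (Fin.succAbove r j)) := rfl
  have h1 : sortTuple (c ∘ Fin.castSucc) = s ∘ Fin.succAbove r := by
    have hrg : Set.range (Fin.castSucc : Fin k → Fin (k+1))
        = Set.range (fun j : Fin k => τ (Fin.succAbove r j)) := by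
      rw [range_comp_succAbove, hτr, ← Fin.succAbove_last, Fin.range_succAbove]
    rw [show (c ∘ Fin.castSucc : Fin k → ℝ) = c ∘ (Fin.castSucc : Fin k → Fin (k+1)) from rfl,
      sortTuple_comp_eq (Fin.castSucc_injective k)
        (fun a b hab => Fin.succAbove_right_injective (τ.injective hab)) hrg,
      ← hcomp, sortTuple_of_monotone hmono]
  refine ⟨h1, ?_⟩
  rw [h1]
  set t : Fin k → ℝ := s ∘ Fin.succAbove r with ht
  set y : ℝ := c (Fin.last k) with hy0
  have hy : y = s r := by rw [hy0, hs]; simp [hτr]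
  have hfilt : ∀ j : Fin k, (y < t j ↔ r < Fin.succAbove r j) := by
    intro j
    rw [hy, ht]
    exact hτ.lt_iff_lt
  have hkey : Fin.succAbove r (delIdx hk t y) = r + 1 := by
    by_cases hrl : r = Fin.last k
    · have hempty : ¬ (Finset.univ.filter fun i => y < t i).Nonempty := by
        rintro ⟨j, hj⟩
        rw [Finset.mem_filter] at hj
        have h2 := (hfilt j).mp hj.2
        rw [hrl, Fin.succAbove_last] at h2
        exact absurd h2 (not_lt.mpr (Fin.le_last _))
      rw [delIdx, dif_neg hempty, hrl, Fin.succAbove_last]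
      rw [Fin.last_add_one]
      ext
      simp
    · have hrk : (r : ℕ) < k := by
        have := Fin.lt_last_iff_ne_last.mpr hrl
        exact this
      set i₁ : Fin k := ⟨(r : ℕ), hrk⟩ with hi₁
      have hcs : Fin.castSucc i₁ = r := by ext; simp [hi₁]
      have hsa : Fin.succAbove r i₁ = Fin.succ i₁ :=
        Fin.succAbove_of_le_castSucc _ _ (le_of_eq hcs.symm)
      have hmem : i₁ ∈ Finset.univ.filter fun i => y < t i := by
        rw [Finset.mem_filter]
        refine ⟨Finset.mem_univ _, (hfilt i₁).mpr ?_⟩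
        rw [hsa, ← hcs]
        exact Fin.castSucc_lt_succ
      have hne : (Finset.univ.filter fun i => y < t i).Nonempty := ⟨i₁, hmem⟩
      have hmin : (Finset.univ.filter fun i => y < t i).min' hne = i₁ := by
        refine le_antisymm (Finset.min'_le _ _ hmem) (Finset.le_min' _ _ _ ?_)
        intro j hj
        rw [Finset.mem_filter] at hj
        have h2 := (hfilt j).mp hj.2
        by_contra hlt
        push_neg at hlt
        have hjr : Fin.castSucc j < r := by
          rw [← hcs]
          exact Fin.castSucc_lt_castSucc_iff.mpr hlt
        rw [Fin.succAbove_of_castSucc_lt _ _ hjr] at h2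
        exact absurd hjr h2.asymm
      rw [delIdx, dif_pos hne, hmin, hsa]
      ext
      rw [Fin.val_succ, Fin.val_add_one_of_lt (Fin.lt_last_iff_ne_last.mpr hrl)]
  set i₀ : Fin k := delIdx hk t y with hi₀
  have hupd : Function.update t i₀ y
      = s ∘ (fun j => if j = i₀ then r else Fin.succAbove r j) := by
    funext j
    by_cases hj : j = i₀
    · simp [hj, Function.update_apply, hy]
    · simp [hj, Function.update_apply, ht]
  have hrange : Set.range (fun j => if j = i₀ then r else Fin.succAbove r j)
      = Set.range (Fin.succAbove (r+1)) := by
    rw [upd_range, Fin.range_succAbove, hkey]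
  rw [exclStep, hupd, sortTuple_comp_eq (upd_injective r i₀) Fin.succAbove_right_injective hrange,
    sortTuple_of_monotone (hτ.monotone.comp (Fin.strictMono_succAbove (r+1)).monotone)]
end key

/-! ### measurability -/

lemma measurableSet_sortCell {n : ℕ} (τ : Equiv.Perm (Fin n)) :
    MeasurableSet {c : Fin n → ℝ | Tuple.sort c = τ} := by
  have hset : {c : Fin n → ℝ | Tuple.sort c = τ}
      = (⋂ (i) (j), {c : Fin n → ℝ | i ≤ j → c (τ i) ≤ c (τ j)})
        ∩ ⋂ (i) (j), {c : Fin n → ℝ | i < j → (c (τ i) = c (τ j) → τ i < τ j)} := by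
    ext c
    simp only [Set.mem_setOf_eq, Set.mem_inter_iff, Set.mem_iInter]
    rw [eq_comm, Tuple.eq_sort_iff]
    constructor
    · exact fun h => ⟨fun i j hij => h.1 hij, h.2⟩
    · exact fun h => ⟨fun i j hij => h.1 i j hij, h.2⟩
  rw [hset]
  refine MeasurableSet.inter ?_ ?_
  · refine MeasurableSet.iInter fun i => MeasurableSet.iInter fun j => ?_
    by_cases hij : i ≤ j
    · simp only [hij, true_implies]
      exact measurableSet_le (measurable_pi_apply _) (measurable_pi_apply _)
    · simp only [hij, false_implies, Set.setOf_true]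
      exact MeasurableSet.univ
  · refine MeasurableSet.iInter fun i => MeasurableSet.iInter fun j => ?_
    by_cases hij : i < j
    · by_cases hτij : τ i < τ j
      · simp only [hij, hτij, implies_true, true_implies, Set.setOf_true]
        exact MeasurableSet.univ
      · have : {c : Fin n → ℝ | i < j → (c (τ i) = c (τ j) → τ i < τ j)}
            = {c : Fin n → ℝ | c (τ i) = c (τ j)}ᶜ := by
          ext c
          simp only [Set.mem_setOf_eq, Set.mem_compl_iff, hij, true_implies]
          exact ⟨fun h h2 => hτij (h h2), fun h h2 => absurd h2 h⟩
        rw [this]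
        exact (measurableSet_eq_fun (f := fun c : Fin n → ℝ => c (τ i))
          (g := fun c : Fin n → ℝ => c (τ j)) (measurable_pi_apply _)
          (measurable_pi_apply _)).compl
    · simp only [hij, false_implies, Set.setOf_true]
      exact MeasurableSet.univ

lemma measurable_sort_piecewise {n : ℕ} {V : Type*} [MeasurableSpace V]
    (F : Equiv.Perm (Fin n) → (Fin n → ℝ) → V) (hF : ∀ τ, Measurable (F τ)) :
    Measurable (fun c => F (Tuple.sort c) c) := by
  intro B hB
  have hset : (fun c => F (Tuple.sort c) c) ⁻¹' B
      = ⋃ τ : Equiv.Perm (Fin n), {c | Tuple.sort c = τ} ∩ (F τ ⁻¹' B) := by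
    ext c
    simp only [Set.mem_preimage, Set.mem_iUnion, Set.mem_inter_iff, Set.mem_setOf_eq]
    exact ⟨fun h => ⟨Tuple.sort c, rfl, h⟩, by rintro ⟨τ, rfl, h⟩; exact h⟩
  rw [hset]
  exact MeasurableSet.iUnion fun τ => (measurableSet_sortCell τ).inter (hF τ hB)

lemma measurable_sortTuple {n : ℕ} : Measurable (sortTuple (k := n)) :=
  measurable_sort_piecewise (fun τ c => c ∘ τ)
    (fun τ => measurable_pi_lambda _ fun j => measurable_pi_apply _)

lemma measurable_exclStep {n : ℕ} (hn : 0 < n) :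
    Measurable (fun p : (Fin n → ℝ) × ℝ => exclStep hn p.1 p.2) := by
  classical
  have hG : ∀ i : Fin n, Measurable (fun p : (Fin n → ℝ) × ℝ =>
      sortTuple (Function.update p.1 i p.2)) := by
    intro i
    refine measurable_sortTuple.comp ?_
    refine measurable_pi_lambda _ fun j => ?_
    simp only [Function.update_apply]
    by_cases hj : j = i
    · simpa [hj] using measurable_snd
    · simp only [hj, if_false]
      exact (measurable_pi_apply j).comp measurable_fst
  have hD : ∀ i : Fin n, MeasurableSet {p : (Fin n → ℝ) × ℝ | delIdx hn p.1 p.2 = i} := by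
    intro i
    have hchar : {p : (Fin n → ℝ) × ℝ | delIdx hn p.1 p.2 = i}
        = ({p : (Fin n → ℝ) × ℝ | p.2 < p.1 i} ∩ ⋂ (j) (_ : j < i), {p | ¬ p.2 < p.1 j})
          ∪ ((⋂ j, {p : (Fin n → ℝ) × ℝ | ¬ p.2 < p.1 j}) ∩ {p | (⟨0, hn⟩ : Fin n) = i}) := by
      ext p
      simp only [Set.mem_setOf_eq, Set.mem_union, Set.mem_inter_iff, Set.mem_iInter]
      by_cases h : (Finset.univ.filter fun j => p.2 < p.1 j).Nonempty
      · rw [delIdx, dif_pos h]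
        constructor
        · rintro rfl
          left
          refine ⟨?_, fun j hj hlt => ?_⟩
          · have := Finset.min'_mem _ h
            rw [Finset.mem_filter] at this
            exact this.2
          · exact absurd (Finset.min'_le _ j (Finset.mem_filter.mpr ⟨Finset.mem_univ _, hlt⟩))
              (not_le.mpr hj)
        · rintro (⟨h1, h2⟩ | ⟨h1, h2⟩)
          · refine le_antisymm (Finset.min'_le _ i (Finset.mem_filter.mpr ⟨Finset.mem_univ _, h1⟩))
              (Finset.le_min' _ _ _ ?_)
            intro j hj
            rw [Finset.mem_filter] at hj
            by_contra hlt
            push_neg at hlt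
            exact h2 j hlt hj.2
          · obtain ⟨j, hj⟩ := h
            rw [Finset.mem_filter] at hj
            exact absurd hj.2 (h1 j)
      · rw [delIdx, dif_neg h]
        constructor
        · rintro rfl
          right
          refine ⟨fun j hlt => h ⟨j, Finset.mem_filter.mpr ⟨Finset.mem_univ _, hlt⟩⟩, rfl⟩
        · rintro (⟨h1, _⟩ | ⟨_, h2⟩)
          · exact absurd ⟨i, Finset.mem_filter.mpr ⟨Finset.mem_univ _, h1⟩⟩ h
          · exact h2
    rw [hchar]
    have hlt : ∀ j : Fin n, MeasurableSet {p : (Fin n → ℝ) × ℝ | p.2 < p.1 j} :=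
      fun j => measurableSet_lt measurable_snd ((measurable_pi_apply j).comp measurable_fst)
    refine MeasurableSet.union ?_ ?_
    · exact (hlt i).inter (MeasurableSet.iInter fun j => MeasurableSet.iInter fun _ =>
        (hlt j).compl)
    · refine (MeasurableSet.iInter fun j => (hlt j).compl).inter ?_
      by_cases h0 : (⟨0, hn⟩ : Fin n) = i
      · simp only [h0, Set.setOf_true]
        exact MeasurableSet.univ
      · simp only [h0, Set.setOf_false]
        exact MeasurableSet.empty
  intro B hB
  have hset : (fun p : (Fin n → ℝ) × ℝ => exclStep hn p.1 p.2) ⁻¹' B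
      = ⋃ i : Fin n, {p : (Fin n → ℝ) × ℝ | delIdx hn p.1 p.2 = i}
          ∩ ((fun p : (Fin n → ℝ) × ℝ => sortTuple (Function.update p.1 i p.2)) ⁻¹' B) := by
    ext p
    simp only [Set.mem_preimage, Set.mem_iUnion, Set.mem_inter_iff, Set.mem_setOf_eq]
    constructor
    · intro h
      exact ⟨delIdx hn p.1 p.2, rfl, h⟩
    · rintro ⟨i, rfl, h⟩
      exact h
  rw [hset]
  exact MeasurableSet.iUnion fun i => (hD i).inter (hG i hB)

/-! ### cells and measures -/

section cells
variable {n : ℕ}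

lemma inj_of_strictMono_comp {c : Fin n → ℝ} {τ : Equiv.Perm (Fin n)}
    (h : StrictMono (c ∘ τ)) : Function.Injective c := by
  intro a b hab
  have h2 : (c ∘ τ) (τ.symm a) = (c ∘ τ) (τ.symm b) := by simpa using hab
  have := h.injective h2
  simpa using congrArg τ this

lemma cell_eq {c : Fin n → ℝ} {τ τ' : Equiv.Perm (Fin n)} (h : StrictMono (c ∘ τ))
    (h' : StrictMono (c ∘ τ')) : τ = τ' := by
  have hcinj := inj_of_strictMono_comp h
  have hco := Tuple.unique_monotone (f := c) (σ := τ) (τ := τ') h.monotone h'.monotone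
  exact Equiv.ext fun i => hcinj (congrFun hco i)

lemma sort_eq_of_strictMono {c : Fin n → ℝ} {τ : Equiv.Perm (Fin n)}
    (h : StrictMono (c ∘ τ)) : Tuple.sort c = τ := by
  have hcinj := inj_of_strictMono_comp h
  exact cell_eq ((Tuple.monotone_sort c).strictMono_of_injective
    (hcinj.comp (Equiv.injective _))) h

lemma measurableSet_cellB (τ : Equiv.Perm (Fin n)) :
    MeasurableSet {c : Fin n → ℝ | StrictMono (c ∘ τ)} := by
  have hset : {c : Fin n → ℝ | StrictMono (c ∘ τ)}
      = ⋂ (i) (j), {c : Fin n → ℝ | i < j → c (τ i) < c (τ j)} := by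
    ext c
    simp only [Set.mem_setOf_eq, Set.mem_iInter]
    exact ⟨fun h i j hij => h hij, fun h a b hab => h a b hab⟩
  rw [hset]
  refine MeasurableSet.iInter fun i => MeasurableSet.iInter fun j => ?_
  by_cases hij : i < j
  · simp only [hij, true_implies]
    exact measurableSet_lt (measurable_pi_apply _) (measurable_pi_apply _)
  · simp only [hij, false_implies, Set.setOf_true]
    exact MeasurableSet.univ

lemma map_comp_perm (σ : Equiv.Perm (Fin n)) :
    (Measure.pi fun _ : Fin n => unifI).map (fun c => c ∘ σ)
      = Measure.pi fun _ : Fin n => unifI := by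
  have hmeas : Measurable (fun c : Fin n → ℝ => c ∘ σ) :=
    measurable_pi_lambda _ fun j => measurable_pi_apply _
  refine (Measure.pi_eq (μ := fun _ : Fin n => unifI) fun s hs => ?_).symm
  rw [Measure.map_apply hmeas (MeasurableSet.univ_pi hs)]
  have hpre : (fun c : Fin n → ℝ => c ∘ σ) ⁻¹' Set.pi Set.univ s
      = Set.pi Set.univ (fun i => s (σ.symm i)) := by
    ext c
    simp only [Set.mem_preimage, Set.mem_pi, Set.mem_univ, true_implies, Function.comp_apply]
    constructor
    · intro h i
      simpa using h (σ.symm i)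
    · intro h i
      simpa using h (σ i)
  rw [hpre, Measure.pi_pi]
  exact Equiv.prod_comp σ.symm (fun i => unifI (s i))

end cells

lemma pair_null {m : ℕ} {i j : Fin (m+1)} (hij : i ≠ j) :
    (Measure.pi fun _ : Fin (m+1) => unifI) {c | c i = c j} = 0 := by
  obtain ⟨j₀, hj₀⟩ := Fin.exists_succAbove_eq (Ne.symm hij)
  have hmp := measurePreserving_piFinSuccAbove (fun _ : Fin (m+1) => unifI) i
  set e := MeasurableEquiv.piFinSuccAbove (fun _ : Fin (m+1) => ℝ) i with he
  have hT : MeasurableSet {p : ℝ × (Fin m → ℝ) | p.1 = p.2 j₀} :=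
    measurableSet_eq_fun (f := fun p : ℝ × (Fin m → ℝ) => p.1)
      (g := fun p : ℝ × (Fin m → ℝ) => p.2 j₀) measurable_fst
      ((measurable_pi_apply j₀).comp measurable_snd)
  have hpre : {c : Fin (m+1) → ℝ | c i = c j} = e ⁻¹' {p | p.1 = p.2 j₀} := by
    ext c
    simp only [Set.mem_setOf_eq, Set.mem_preimage, he, MeasurableEquiv.piFinSuccAbove,
      MeasurableEquiv.coe_mk, Equiv.symm_symm, Fin.insertNthEquiv_symm_apply, Fin.removeNth,
      ← hj₀]
    exact Iff.rfl
  rw [hpre, ← Measure.map_apply e.measurable hT, hmp.map_eq, Measure.prod_apply hT]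
  have hz : ∀ a : ℝ, (Measure.pi fun _ : Fin m => unifI)
      (Prod.mk a ⁻¹' {p : ℝ × (Fin m → ℝ) | p.1 = p.2 j₀}) = 0 := by
    intro a
    have hset : Prod.mk a ⁻¹' {p : ℝ × (Fin m → ℝ) | p.1 = p.2 j₀}
        = Set.pi Set.univ (fun l => if l = j₀ then {a} else Set.univ) := by
      ext f
      simp only [Set.mem_preimage, Set.mem_setOf_eq, Set.mem_pi, Set.mem_univ, true_implies]
      constructor
      · intro h l
        by_cases hl : l = j₀ <;> simp [hl, ← h]
      · intro h
        have := h j₀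
        simp at this
        exact this.symm
    rw [hset, Measure.pi_pi]
    refine Finset.prod_eq_zero (Finset.mem_univ j₀) ?_
    have h1 : unifI {a} ≤ volume {a} := Measure.le_iff'.mp Measure.restrict_le_self _
    simp only [if_pos rfl]
    rw [Real.volume_singleton] at h1
    exact le_antisymm (by simpa using h1) zero_le
  simp only [hz]
  simp

/-- The law of the order statistics of `k` i.i.d. `Uniform([0,1])` random
variables is stationary for the circular exclusion update with an independent uniform
insertion. -/
theorem stmt0 (k : ℕ) (hk : 0 < k) :
    (((Measure.pi fun _ : Fin k => unifI).map sortTuple).prod unifI).map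
        (fun p : (Fin k → ℝ) × ℝ => exclStep hk p.1 p.2)
      = (Measure.pi fun _ : Fin k => unifI).map sortTuple := by
  classical
  set Pk := Measure.pi fun _ : Fin k => unifI with hPkdef
  set P := Measure.pi fun _ : Fin (k+1) => unifI with hPdef
  set B : Equiv.Perm (Fin (k+1)) → Set (Fin (k+1) → ℝ) :=
    fun τ => {c | StrictMono (c ∘ τ)} with hBdef
  set pairF : (Fin (k+1) → ℝ) → (Fin k → ℝ) × ℝ :=
    fun c => (c ∘ Fin.castSucc, c (Fin.last k)) with hpairF
  have hpairF_meas : Measurable pairF :=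
    Measurable.prodMk (measurable_pi_lambda _ fun j => measurable_pi_apply _)
      (measurable_pi_apply _)
  -- M1 : Pk.prod unifI = P.map pairF
  have hM1 : Pk.prod unifI = P.map pairF := by
    have hmp := measurePreserving_piFinSuccAbove (fun _ : Fin (k+1) => unifI) (Fin.last k)
    set e := MeasurableEquiv.piFinSuccAbove (fun _ : Fin (k+1) => ℝ) (Fin.last k) with he
    have hswap : Pk.prod unifI = Measure.map Prod.swap (unifI.prod Pk) := Measure.prod_swap.symm
    rw [hswap, ← hmp.map_eq, Measure.map_map measurable_swap e.measurable]
    congr 1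
    funext c
    simp only [Function.comp_apply, he, MeasurableEquiv.piFinSuccAbove, MeasurableEquiv.coe_mk,
      Equiv.symm_symm, Fin.insertNthEquiv_symm_apply, Prod.swap_prod_mk, hpairF]
    refine Prod.ext ?_ rfl
    funext j
    simp [Fin.removeNth, Fin.succAbove_last, Fin.init]
  -- conull set
  have hconull : P ((⋃ τ, B τ)ᶜ) = 0 := by
    have hsub : (⋃ τ : Equiv.Perm (Fin (k+1)), B τ)ᶜ
        ⊆ ⋃ (i : Fin (k+1)) (j : Fin (k+1)) (_ : i ≠ j), {c : Fin (k+1) → ℝ | c i = c j} := by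
      intro c hc
      by_contra hcc
      simp only [Set.mem_iUnion, not_exists, Set.mem_setOf_eq] at hcc
      have hinj : Function.Injective c := by
        intro a b hab
        by_contra hne
        exact hcc a b hne hab
      apply hc
      refine Set.mem_iUnion.mpr ⟨Tuple.sort c, ?_⟩
      exact (Tuple.monotone_sort c).strictMono_of_injective (hinj.comp (Equiv.injective _))
    refine measure_mono_null hsub ?_
    refine measure_iUnion_null fun i => measure_iUnion_null fun j => measure_iUnion_null fun hij =>
      pair_null hij
  have hae_union : ∀ᵐ c ∂P, c ∈ ⋃ τ, B τ := by
    rw [MeasureTheory.ae_iff]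
    exact hconull
  -- cells: disjoint, measurable
  have hBmeas : ∀ τ, MeasurableSet (B τ) := fun τ => measurableSet_cellB τ
  have hBdisj : Pairwise (Function.onFun Disjoint B) := by
    intro τ τ' hne
    rw [Function.onFun, Set.disjoint_left]
    intro c hc hc'
    exact hne (cell_eq hc hc')
  -- nu_const
  have hnu : ∀ τ τ' : Equiv.Perm (Fin (k+1)),
      (P.restrict (B τ)).map sortTuple = (P.restrict (B τ')).map sortTuple := by
    intro τ τ'
    set σ : Equiv.Perm (Fin (k+1)) := τ'.symm.trans τ with hσ
    have hρmeas : Measurable (fun c : Fin (k+1) → ℝ => c ∘ σ) :=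
      measurable_pi_lambda _ fun j => measurable_pi_apply _
    have hpre : (fun c : Fin (k+1) → ℝ => c ∘ σ) ⁻¹' (B τ') = B τ := by
      ext c
      simp only [Set.mem_preimage, hBdef, Set.mem_setOf_eq]
      have : (c ∘ ⇑σ) ∘ ⇑τ' = c ∘ ⇑τ := by
        funext i
        simp [hσ]
      rw [this]
    have hrestr : P.restrict (B τ') = ((P.map (fun c => c ∘ σ)).restrict (B τ')) := by
      rw [map_comp_perm]
    rw [hrestr, Measure.restrict_map hρmeas (hBmeas τ'), hpre,
      Measure.map_map measurable_sortTuple hρmeas]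
    congr 1
    funext c
    exact (sortTuple_comp_perm c σ).symm
  -- decomposition of a map over cells
  have hdecomp : ∀ {V : Type} [MeasurableSpace V] (g : (Fin (k+1) → ℝ) → V),
      Measurable g → P.map g = Measure.sum (fun τ => (P.restrict (B τ)).map g) := by
    intro V _ g hg
    conv_lhs => rw [← Measure.restrict_eq_self_of_ae_mem hae_union]
    rw [Measure.restrict_iUnion hBdisj hBmeas, Measure.map_sum hg.aemeasurable]
  -- del maps
  set del : Fin (k+1) → (Fin (k+1) → ℝ) → (Fin k → ℝ) :=
    fun m s => s ∘ Fin.succAbove m with hdel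
  have hdel_meas : ∀ m, Measurable (del m) :=
    fun m => measurable_pi_lambda _ fun j => measurable_pi_apply _
  set rk : Equiv.Perm (Fin (k+1)) → Fin (k+1) := fun τ => τ.symm (Fin.last k) with hrk
  -- measurable global versions
  set N : (Fin (k+1) → ℝ) → (Fin k → ℝ) :=
    fun c => (c ∘ (Tuple.sort c)) ∘ Fin.succAbove (rk (Tuple.sort c) + 1) with hN
  set N' : (Fin (k+1) → ℝ) → (Fin k → ℝ) :=
    fun c => (c ∘ (Tuple.sort c)) ∘ Fin.succAbove (rk (Tuple.sort c)) with hN'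
  have hNmeas : Measurable N :=
    measurable_sort_piecewise (fun τ c => (c ∘ τ) ∘ Fin.succAbove (rk τ + 1))
      (fun τ => measurable_pi_lambda _ fun j => measurable_pi_apply _)
  have hN'meas : Measurable N' :=
    measurable_sort_piecewise (fun τ c => (c ∘ τ) ∘ Fin.succAbove (rk τ))
      (fun τ => measurable_pi_lambda _ fun j => measurable_pi_apply _)
  -- pointwise identities on the union
  have hptN : ∀ c ∈ ⋃ τ, B τ,
      exclStep hk (sortTuple (c ∘ Fin.castSucc)) (c (Fin.last k)) = N c := by
    intro c hc
    obtain ⟨τ, hcτ⟩ := Set.mem_iUnion.mp hc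
    have hsort : Tuple.sort c = τ := sort_eq_of_strictMono hcτ
    rw [hN]
    dsimp only
    rw [hsort]
    exact (key_identity hk c τ hcτ).2
  have hptN' : ∀ c ∈ ⋃ τ, B τ, sortTuple (c ∘ Fin.castSucc) = N' c := by
    intro c hc
    obtain ⟨τ, hcτ⟩ := Set.mem_iUnion.mp hc
    have hsort : Tuple.sort c = τ := sort_eq_of_strictMono hcτ
    rw [hN']
    dsimp only
    rw [hsort]
    exact (key_identity hk c τ hcτ).1
  -- LHS rewriting
  have hLHS : ((Pk.map sortTuple).prod unifI).map (fun p : (Fin k → ℝ) × ℝ =>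
      exclStep hk p.1 p.2) = P.map N := by
    have h1 : (Pk.map sortTuple).prod unifI
        = (Pk.prod unifI).map (Prod.map sortTuple id) := by
      rw [← Measure.map_prod_map _ _ measurable_sortTuple measurable_id, Measure.map_id]
    rw [h1, Measure.map_map (measurable_exclStep hk)
      (measurable_sortTuple.prodMap measurable_id), hM1,
      Measure.map_map ((measurable_exclStep hk).comp
        (measurable_sortTuple.prodMap measurable_id)) hpairF_meas]
    refine Measure.map_congr ?_
    refine hae_union.mono fun c hc => ?_
    exact hptN c hc
  have hRHS : Pk.map sortTuple = P.map N' := by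
    have h2 : Pk = P.map (fun c => c ∘ Fin.castSucc) := by
      have : Pk = (Pk.prod unifI).map Prod.fst := by
        rw [Measure.map_fst_prod]
        simp
      rw [this, hM1, Measure.map_map measurable_fst hpairF_meas]
      rfl
    rw [h2, Measure.map_map measurable_sortTuple
      (measurable_pi_lambda _ fun j => measurable_pi_apply _)]
    refine Measure.map_congr ?_
    refine hae_union.mono fun c hc => ?_
    exact hptN' c hc
  rw [hLHS, hRHS, hdecomp N hNmeas, hdecomp N' hN'meas]
  -- on each cell, replace N by del ∘ sortTuple
  set ν : Measure (Fin (k+1) → ℝ) := (P.restrict (B 1)).map sortTuple with hν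
  have hcellN : ∀ τ : Equiv.Perm (Fin (k+1)),
      (P.restrict (B τ)).map N = ν.map (del (rk τ + 1)) := by
    intro τ
    have h1 : (P.restrict (B τ)).map N
        = (P.restrict (B τ)).map ((del (rk τ + 1)) ∘ sortTuple) := by
      refine Measure.map_congr ?_
      refine (ae_restrict_mem (hBmeas τ)).mono fun c hc => ?_
      have hsort : Tuple.sort c = τ := sort_eq_of_strictMono hc
      simp only [hN, hdel, Function.comp_apply, sortTuple, hsort]
    rw [h1, ← Measure.map_map (hdel_meas _) measurable_sortTuple, hnu τ 1]
  have hcellN' : ∀ τ : Equiv.Perm (Fin (k+1)),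
      (P.restrict (B τ)).map N' = ν.map (del (rk τ)) := by
    intro τ
    have h1 : (P.restrict (B τ)).map N'
        = (P.restrict (B τ)).map ((del (rk τ)) ∘ sortTuple) := by
      refine Measure.map_congr ?_
      refine (ae_restrict_mem (hBmeas τ)).mono fun c hc => ?_
      have hsort : Tuple.sort c = τ := sort_eq_of_strictMono hc
      simp only [hN', hdel, Function.comp_apply, sortTuple, hsort]
    rw [h1, ← Measure.map_map (hdel_meas _) measurable_sortTuple, hnu τ 1]
  simp_rw [hcellN, hcellN']
  -- reindex the sum
  set E : Equiv.Perm (Fin (k+1)) ≃ Equiv.Perm (Fin (k+1)) :=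
    Equiv.mulRight ((Equiv.addRight (1 : Fin (k+1))).symm : Equiv.Perm (Fin (k+1))) with hE
  have hrkE : ∀ τ : Equiv.Perm (Fin (k+1)), rk (E τ) = rk τ + 1 := by
    intro τ
    show (Equiv.symm (τ * (Equiv.addRight (1 : Fin (k+1))).symm)) (Fin.last k)
      = (Equiv.symm τ) (Fin.last k) + 1
    rw [Equiv.Perm.mul_def, Equiv.symm_trans_apply]
    simp
  ext s hs
  rw [Measure.sum_apply _ hs, Measure.sum_apply _ hs]
  calc ∑' τ : Equiv.Perm (Fin (k+1)), (ν.map (del (rk τ + 1))) s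
      = ∑' τ : Equiv.Perm (Fin (k+1)), (ν.map (del (rk (E τ)))) s :=
        tsum_congr fun τ => by rw [hrkE τ]
    _ = ∑' τ : Equiv.Perm (Fin (k+1)), (ν.map (del (rk τ))) s :=
        Equiv.tsum_eq E (fun τ => (ν.map (del (rk τ))) s)
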